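/- Let A ∈ 𝒢(Z,C) be nonempty. Then 0⁺A = {z ∈ Z : for every z* ∈ C⁻∖{0}, either σ(z*|A) = +∞ or z*(z) ≤ 0}. Consequently, for every A ∈ 𝒢(Z,C), either A = ∅ or 0⁺A = ⋂ {{z ∈ Z : z*(z) ≤ 0} : z* ∈ C⁻∖{0} with σ(z*|A) ∈ ℝ} (the intersection over the empty family being Z). -/

import Mathlib

open Set Pointwise

noncomputable section

variable {Z : Type*} [AddCommGroup Z] [Module ℝ Z] [TopologicalSpace Z]

/-- The inf-residual `A ⊖ B = {z : B + {z} ⊆ A}`. -/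
def resid (A B : Set Z) : Set Z := {z : Z | B + {z} ⊆ A}

/-- The recession cone `0⁺A`, with the convention `0⁺∅ = ∅`. -/
def recCone (A : Set Z) : Set Z := {z : Z | A.Nonempty ∧ A + {z} ⊆ A}

/-- `A ⊕ B = cl (A + B)`. -/
def oplus (A B : Set Z) : Set Z := closure (A + B)

/-- Membership in `𝒢(Z,C)`: `A = cl co (A + C)`. -/
def IsG (C A : Set Z) : Prop := A = closure (convexHull ℝ (A + C))

/-- The set `C⁻ \ {0}` of nonzero elements of the negative dual cone. -/
def negDualNZ (C : Set Z) : Set (Z →L[ℝ] ℝ) :=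
  {p : Z →L[ℝ] ℝ | (∀ c ∈ C, p c ≤ 0) ∧ p ≠ 0}

/-- `inf {-z*(z) : z ∈ A}` as an extended real. -/
def scal (p : Z →L[ℝ] ℝ) (A : Set Z) : EReal :=
  sInf ((fun z => ((-(p z) : ℝ) : EReal)) '' A)

/-- Support function `σ(z*|A) = sup {z*(z) : z ∈ A}` as an extended real. -/
def suppF (p : Z →L[ℝ] ℝ) (A : Set Z) : EReal :=
  sSup ((fun z => ((p z : ℝ) : EReal)) '' A)

/-- Inf-residuation on the extended reals: `r ⊖ s = inf {t ∈ ℝ : r ≤ s + t}`. -/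
def eresid (r s : EReal) : EReal :=
  sInf ((fun t : ℝ => (t : EReal)) '' {t : ℝ | r ≤ s + (t : EReal)})

variable {X : Type*} [AddCommGroup X] [Module ℝ X]

/-- The scalarization `φ_{f,z*}(x) = inf {-z*(z) : z ∈ f(x)}`. -/
def phi (f : X → Set Z) (p : Z →L[ℝ] ℝ) (x : X) : EReal := scal p (f x)

/-- Convexity for set-valued functions:
`f(t x₁ + (1-t) x₂) ⊇ cl (t f(x₁) + (1-t) f(x₂))`. -/
def ConvexSV (f : X → Set Z) : Prop :=
  ∀ x₁ x₂ : X, ∀ t : ℝ, t ∈ Ioo (0:ℝ) 1 →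
    closure (t • f x₁ + (1 - t) • f x₂) ⊆ f (t • x₁ + (1 - t) • x₂)

/-- The set-valued directional derivative
`f′(x,u) = ⋂_{t₀>0} cl co ⋃_{0<t<t₀} (1/t)•(f(x+tu) ⊖ f(x))`. -/
def sder (f : X → Set Z) (x u : X) : Set Z :=
  ⋂ t₀ ∈ Ioi (0:ℝ), closure (convexHull ℝ
    (⋃ t ∈ Ioo (0:ℝ) t₀, (1 / t) • resid (f (x + t • u)) (f x)))

/-- The scalar Dini derivative `φ′_{f,z*}(x,u) = inf_{t>0} (1/t)(φ(x+tu) ⊖ φ(x))`. -/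
def phiDer (f : X → Set Z) (p : Z →L[ℝ] ℝ) (x u : X) : EReal :=
  ⨅ t ∈ Ioi (0:ℝ), (((1 / t : ℝ)) : EReal) * eresid (phi f p (x + t • u)) (phi f p x)

end


theorem key_recCone
  {Z : Type*} [AddCommGroup Z] [Module ℝ Z] [TopologicalSpace Z]
  [IsTopologicalAddGroup Z] [ContinuousSMul ℝ Z] [LocallyConvexSpace ℝ Z] [T2Space Z]
  (C : Set Z) (hCcone : ∀ c ∈ C, ∀ r : ℝ, 0 < r → r • c ∈ C)
  (A : Set Z) (hA : IsG C A) (hAne : A.Nonempty) :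
    recCone A = {z : Z | ∀ p ∈ negDualNZ C, suppF p A = ⊤ ∨ p z ≤ 0} := by
  have hAC : A + C ⊆ A := by
    calc A + C ⊆ convexHull ℝ (A + C) := subset_convexHull ℝ _
    _ ⊆ closure (convexHull ℝ (A + C)) := subset_closure
    _ = A := hA.symm
  have hAclosed : IsClosed A := hA ▸ isClosed_closure
  have hAconv : Convex ℝ A := hA ▸ (convex_convexHull ℝ _).closure
  ext z
  constructor
  · rintro ⟨-, hz⟩ p ⟨hpC, hp0⟩
    by_cases hpz : p z ≤ 0
    · exact Or.inr hpz
    · left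
      push_neg at hpz
      have hstep : ∀ w ∈ A, w + z ∈ A := fun w hw => hz (Set.add_mem_add hw rfl)
      obtain ⟨a₀, ha₀⟩ := hAne
      have hn : ∀ n : ℕ, a₀ + (n : ℝ) • z ∈ A := by
        intro n
        induction n with
        | zero => simpa using ha₀
        | succ n ih =>
          have : (a₀ + (n : ℝ) • z) + z ∈ A := hstep _ ih
          convert this using 1
          push_cast
          rw [add_smul, one_smul]
          abel
      rw [suppF, sSup_eq_top]
      intro b hb
      induction b with
      | bot =>
        exact ⟨_, Set.mem_image_of_mem _ ha₀, EReal.bot_lt_coe _⟩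
      | coe r =>
        obtain ⟨n, hn'⟩ := exists_nat_gt ((r - p a₀) / p z)
        refine ⟨_, Set.mem_image_of_mem _ (hn n), ?_⟩
        rw [EReal.coe_lt_coe_iff]
        have : r - p a₀ < (n : ℝ) * p z := (div_lt_iff₀ hpz).mp hn'
        have hval : p (a₀ + (n : ℝ) • z) = p a₀ + (n : ℝ) * p z := by
          simp [map_add, map_smul, smul_eq_mul]
        rw [hval]; linarith
      | top => exact absurd hb (lt_irrefl _)
  · intro hz
    refine ⟨hAne, ?_⟩
    rintro w hw
    rw [Set.add_singleton] at hw
    obtain ⟨a, ha, rfl⟩ := hw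
    by_contra hnot
    obtain ⟨p, u, hpu, hux⟩ := geometric_hahn_banach_closed_point hAconv hAclosed hnot
    have hpz : 0 < p z := by
      have h1 : p a < u := hpu a ha
      have h2 : u < p a + p z := by simpa [map_add] using hux
      linarith
    have hpC : ∀ c ∈ C, p c ≤ 0 := by
      intro c hc
      by_contra hpc
      push_neg at hpc
      set t : ℝ := (u - p a) / p c with ht
      have htpos : 0 < t := div_pos (by linarith [hpu a ha]) hpc
      have hmem : a + t • c ∈ A := hAC (Set.add_mem_add ha (hCcone c hc t htpos))
      have := hpu _ hmem
      rw [map_add, map_smul, smul_eq_mul, ht, div_mul_cancel₀ _ (ne_of_gt hpc)] at this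
      linarith
    have hp0 : p ≠ 0 := by
      intro h
      rw [h] at hpz
      simp at hpz
    rcases hz p ⟨hpC, hp0⟩ with htop | hle
    · have hle' : suppF p A ≤ (u : EReal) := by
        rw [suppF]
        apply sSup_le
        rintro x ⟨y, hy, rfl⟩
        exact EReal.coe_le_coe_iff.mpr (hpu y hy).le
      rw [htop] at hle'
      exact absurd hle' (by simp)
    · linarith

theorem stmt_1
  {Z : Type*} [AddCommGroup Z] [Module ℝ Z] [TopologicalSpace Z]
  [IsTopologicalAddGroup Z] [ContinuousSMul ℝ Z] [LocallyConvexSpace ℝ Z] [T2Space Z]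
  (C : Set Z) (hCclosed : IsClosed C) (hCconv : Convex ℝ C)
  (hCcone : ∀ c ∈ C, ∀ r : ℝ, 0 < r → r • c ∈ C) (hC0 : (0:Z) ∈ C)
  (A : Set Z) (hA : IsG C A) (hAne : A.Nonempty) :
    recCone A = {z : Z | ∀ p ∈ negDualNZ C, suppF p A = ⊤ ∨ p z ≤ 0}
    ∧ ∀ B : Set Z, IsG C B → (B = ∅ ∨
        recCone B = ⋂ p ∈ {p | p ∈ negDualNZ C ∧ ∃ r : ℝ, suppF p B = (r : EReal)},
          {z : Z | p z ≤ 0}) := by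
  have keyA := key_recCone C hCcone A hA hAne
  refine ⟨keyA, ?_⟩
  intro B hB
  rcases Set.eq_empty_or_nonempty B with h | hBne
  · exact Or.inl h
  · right
    rw [key_recCone C hCcone B hB hBne]
    ext z
    simp only [Set.mem_setOf_eq, Set.mem_iInter]
    constructor
    · rintro h p ⟨hp, r, hr⟩
      rcases h p hp with ht | hle
      · rw [ht] at hr
        exact absurd hr (by simp)
      · exact hle
    · intro h p hp
      by_cases htop : suppF p B = ⊤
      · exact Or.inl htop
      · right
        apply h p
        refine ⟨hp, ?_⟩
        have hbot : suppF p B ≠ ⊥ := by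
          obtain ⟨b, hb⟩ := hBne
          have : ((p b : ℝ) : EReal) ≤ suppF p B :=
            le_sSup (Set.mem_image_of_mem _ hb)
          intro hB'
          rw [hB'] at this
          exact absurd this (by simp)
        lift suppF p B to ℝ using ⟨htop, hbot⟩ with r hr
        exact ⟨r, rfl⟩
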